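/- arXiv:2012.10587 — 2 statements merged into one kernel-verified Lean document; each statement's English description precedes it below -/
import Mathlib

section
/- Suppose r is a positive integer, N is a positive integer, χ is a Dirichlet character modulo N, and k ∈ (1/2)ℤ. If M_k(N, χν_η^r) ≠ {0}, then 2k − r ≡ 1 − χ(−1) (mod 4). In particular, if gcd(r, 6) = 1 and M_k(N, χν_η^r) ≠ {0}, then k is not an integer. -/
open Complex UpperHalfPlane CongruenceSubgroup Matrix NumberField
open scoped Manifold MatrixGroups Real

noncomputable section

abbrev SL2Z := Matrix.SpecialLinearGroup (Fin 2) ℤ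

/-- The automorphy denominator `c z + d` for `γ = (a b; c d)`. -/
def sldenom (γ : SL2Z) (z : ℍ) : ℂ := ((γ 1 0 : ℤ) : ℂ) * (z : ℂ) + ((γ 1 1 : ℤ) : ℂ)

/-- `q^{n/24} = e^{2π i n z/24}`. -/
def q24 (n : ℕ) (z : ℍ) : ℂ := Complex.exp (2 * Real.pi * Complex.I * (n : ℂ) * (z : ℂ) / 24)

/-- The Dedekind eta function `η(z) = q^{1/24} ∏_{n≥1} (1 - qⁿ)`. -/
def dedekindEta (z : ℍ) : ℂ :=
  Complex.exp (Real.pi * Complex.I * (z : ℂ) / 12) *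
    ∏' n : ℕ, (1 - Complex.exp (2 * Real.pi * Complex.I * ((n : ℂ) + 1) * (z : ℂ)))

/-- The Jacobi theta function `θ(z) = Σ_{n ∈ ℤ} q^{n²}`. -/
def theta (z : ℍ) : ℂ := ∑' n : ℤ, Complex.exp (2 * Real.pi * Complex.I * ((n : ℂ)) ^ 2 * (z : ℂ))

/-- The eta multiplier `ν_η`, characterized by
`η(γz) = ν_η(γ) (cz+d)^{1/2} η(z)` (principal branch); we evaluate at `z = i`. -/
def nuEta (γ : SL2Z) : ℂ :=
  dedekindEta (γ • UpperHalfPlane.I) / (sldenom γ UpperHalfPlane.I ^ ((1 : ℂ) / 2) * dedekindEta UpperHalfPlane.I)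

/-- The theta multiplier `ν_θ`, characterized by
`θ(γz) = ν_θ(γ) (cz+d)^{1/2} θ(z)` (principal branch) for `γ ∈ Γ₀(4)`. -/
def nuTheta (γ : SL2Z) : ℂ :=
  theta (γ • UpperHalfPlane.I) /
    (sldenom γ UpperHalfPlane.I ^ ((1 : ℂ) / 2) * theta UpperHalfPlane.I)

/-- The Kronecker symbol `(12/n)`. -/
def kron12 (n : ℤ) : ℤ :=
  if n % 12 = 1 ∨ n % 12 = 11 then 1 else if n % 12 = 5 ∨ n % 12 = 7 then -1 else 0

/-- Holomorphic modular forms of (possibly half-integral) weight `k`, level `Γ₀(N)` and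
multiplier system `ν`: holomorphy, transformation, and boundedness at all cusps. -/
def IsModForm (N : ℕ) (k : ℝ) (ν : SL2Z → ℂ) (f : ℍ → ℂ) : Prop :=
  MDifferentiable 𝓘(ℂ) 𝓘(ℂ) f ∧
  (∀ γ ∈ Gamma0 N, ∀ z : ℍ, f (γ • z) = ν γ * sldenom γ z ^ (k : ℂ) * f z) ∧
  ∀ γ : SL2Z, IsBoundedAtImInfty fun z => sldenom γ z ^ (-(k : ℂ)) * f (γ • z)

/-- Cusp forms of (possibly half-integral) weight `k`, level `Γ₀(N)` and multiplier `ν`. -/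
def IsCuspForm (N : ℕ) (k : ℝ) (ν : SL2Z → ℂ) (f : ℍ → ℂ) : Prop :=
  MDifferentiable 𝓘(ℂ) 𝓘(ℂ) f ∧
  (∀ γ ∈ Gamma0 N, ∀ z : ℍ, f (γ • z) = ν γ * sldenom γ z ^ (k : ℂ) * f z) ∧
  ∀ γ : SL2Z, IsZeroAtImInfty fun z => sldenom γ z ^ (-(k : ℂ)) * f (γ • z)

/-- Weakly holomorphic modular forms: meromorphic at the cusps. -/
def IsWeakModForm (N : ℕ) (k : ℝ) (ν : SL2Z → ℂ) (f : ℍ → ℂ) : Prop :=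
  MDifferentiable 𝓘(ℂ) 𝓘(ℂ) f ∧
  (∀ γ ∈ Gamma0 N, ∀ z : ℍ, f (γ • z) = ν γ * sldenom γ z ^ (k : ℂ) * f z) ∧
  ∀ γ : SL2Z, ∃ m : ℕ, IsBoundedAtImInfty fun z =>
    q24 m z * (sldenom γ z ^ (-(k : ℂ)) * f (γ • z))

/-- `x ∈ K` is `v`-integral: it is a quotient `a/b` with `a, b ∈ 𝓞 K`, `b ∉ v`. -/
def VInt {K : Type*} [Field K] [NumberField K] (v : Ideal (𝓞 K)) (x : K) : Prop :=
  ∃ a b : 𝓞 K, b ∉ v ∧ (b : K) * x = (a : K)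

/-- Congruence modulo `v` in the ring of `v`-integral elements of `K`. -/
def VCong {K : Type*} [Field K] [NumberField K] (v : Ideal (𝓞 K)) (x y : K) : Prop :=
  ∃ a b : 𝓞 K, b ∉ v ∧ a ∈ v ∧ (b : K) * (x - y) = (a : K)

/-- The point `24 z` of the upper half-plane. -/
def smul24 (z : ℍ) : ℍ := ⟨24 * (z : ℂ), by
  have := z.2
  simp only [Complex.mul_im]
  norm_num
  simpa using this⟩

/-- Horizontal translation `z ↦ z + x` on the upper half-plane. -/
def hshift (x : ℝ) (z : ℍ) : ℍ := ⟨(z : ℂ) + (x : ℂ), by simpa using z.2⟩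

/-- `ε_p`: `1` if `p ≡ 1 (mod 4)`, `i` if `p ≡ 3 (mod 4)`. -/
def epsP (p : ℕ) : ℂ := if p % 4 = 1 then 1 else Complex.I

/-- if `M_k(N, χ ν_η^r) ≠ {0}` then `2k - r ≡ 1 - χ(-1) (mod 4)`;
in particular if `(r,6) = 1` then `k ∉ ℤ`. -/
theorem stmt3 (r : ℕ) (hr0 : 0 < r)
    (N : ℕ) (hN : 0 < N) (χ : DirichletCharacter ℂ N)
    (k : ℝ) (j : ℤ) (hk : 2 * k = (j : ℝ))
    (hne : ∃ f : ℍ → ℂ,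
      IsModForm N k (fun γ => χ ((γ 1 1 : ℤ) : ZMod N) * nuEta γ ^ r) f ∧ f ≠ 0) :
    (∃ c : ℤ, (c : ℂ) = χ (-1) ∧ j - r ≡ 1 - c [ZMOD 4]) ∧
    (Nat.gcd r 6 = 1 → ∀ i : ℤ, k ≠ (i : ℝ)) := by
  classical
  obtain ⟨f, ⟨hdiff, htrans, hbd⟩, hf0⟩ := hne
  obtain ⟨z₀, hz₀⟩ := Function.ne_iff.mp hf0
  simp only [Pi.zero_apply] at hz₀
  have hmem : (-1 : SL2Z) ∈ Gamma0 N := by rw [Gamma0_mem]; simp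
  have hsmul : ∀ z : ℍ, (-1 : SL2Z) • z = z := fun z => by
    have := ModularGroup.SL_neg_smul (1 : SL2Z) z
    simpa using this
  have he11 : ((-1 : SL2Z) 1 1 : ℤ) = -1 := by simp
  have he10 : ((-1 : SL2Z) 1 0 : ℤ) = 0 := by simp
  have hdenom : ∀ z : ℍ, sldenom (-1 : SL2Z) z = -1 := fun z => by
    simp [sldenom, he11, he10]
  -- (-1)^(1/2) = I
  have hhalf : (-1 : ℂ) ^ ((1:ℂ)/2) = Complex.I := by
    rw [Complex.cpow_def_of_ne_zero (by norm_num), Complex.log_neg_one,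
      show (Real.pi : ℂ) * Complex.I * (1/2) = ((Real.pi/2 : ℝ) : ℂ) * Complex.I by
        push_cast; ring, Complex.exp_mul_I]
    simp
  -- the transformation law at γ = -1
  have htr := htrans (-1) hmem z₀
  simp only [hsmul, he11, hdenom] at htr
  push_cast at htr
  -- compute (-1)^(k:ℂ) = I^j
  have hkj : (k : ℂ) = (j : ℂ) / 2 := by
    have : ((2 * k : ℝ) : ℂ) = ((j : ℝ) : ℂ) := by rw [hk]
    push_cast at this
    linear_combination this / 2
  have hw : (-1 : ℂ) ^ (k : ℂ) = Complex.I ^ j := by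
    rw [Complex.cpow_def_of_ne_zero (by norm_num), Complex.log_neg_one, hkj,
      show (Real.pi : ℂ) * Complex.I * ((j:ℂ)/2) = (j : ℂ) * (((Real.pi/2 : ℝ) : ℂ) * Complex.I)
        by push_cast; ring, Complex.exp_int_mul, Complex.exp_mul_I]
    simp
  -- compute nuEta (-1)
  by_cases hη : dedekindEta UpperHalfPlane.I = 0
  · exfalso
    have hnu : nuEta (-1 : SL2Z) = 0 := by
      rw [nuEta, hsmul, hη]
      simp
    rw [hnu, zero_pow hr0.ne', mul_zero, zero_mul, zero_mul] at htr
    exact hz₀ htr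
  have hnu : nuEta (-1 : SL2Z) = -Complex.I := by
    rw [nuEta, hsmul, hdenom, hhalf]
    rw [div_eq_iff (by simp [hη, Complex.I_ne_zero])]
    ring_nf
    simp [Complex.I_sq]
  rw [hnu, hw] at htr
  -- cancel f z₀
  have hC : χ (-1) * (-Complex.I) ^ r * Complex.I ^ j = 1 := by
    rcases mul_left_eq_self₀.mp htr.symm with h | h
    · exact h
    · exact absurd h hz₀
  -- rewrite as χ(-1) * I^(j-r) = 1
  have hIr : (-Complex.I) ^ r = Complex.I ^ (-(r:ℤ)) := by
    rw [← Complex.inv_I, inv_pow, ← zpow_natCast, ← _root_.zpow_neg]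
  have hM : χ (-1) * Complex.I ^ (j - (r:ℤ)) = 1 := by
    rw [show j - (r:ℤ) = -(r:ℤ) + j by ring, zpow_add₀ Complex.I_ne_zero, ← hIr,
      ← mul_assoc]
    exact hC
  -- χ(-1) = ±1
  have hsq : χ (-1) * χ (-1) = 1 := by
    rw [← _root_.map_mul]; norm_num
  -- reduce exponent mod 4
  set s : ℤ := j - (r:ℤ) with hs
  have h4 : Complex.I ^ (4:ℤ) = 1 := by
    rw [show (4:ℤ) = ((4:ℕ):ℤ) by rfl, zpow_natCast]
    norm_num [pow_succ, Complex.I_sq]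
  have hdecomp : Complex.I ^ s = Complex.I ^ (s % 4) := by
    conv_lhs => rw [show s = 4 * (s / 4) + s % 4 by omega]
    rw [zpow_add₀ Complex.I_ne_zero, _root_.zpow_mul, h4, _root_.one_zpow, one_mul]
  rw [hdecomp] at hM
  have hmr : s % 4 = 0 ∨ s % 4 = 1 ∨ s % 4 = 2 ∨ s % 4 = 3 := by omega
  have key : ∃ c : ℤ, (c = 1 ∨ c = -1) ∧ ((c:ℂ) = χ (-1)) ∧ s % 4 = (1 - c) % 4 := by
    rcases mul_self_eq_one_iff.mp hsq with h1 | h1 <;> rw [h1] at hM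
    · refine ⟨1, Or.inl rfl, by rw [h1]; norm_num, ?_⟩
      rw [one_mul] at hM
      rcases hmr with h | h | h | h <;> rw [h] at hM
      · omega
      · rw [zpow_one] at hM; simpa using congrArg Complex.im hM
      · rw [show (2:ℤ) = ((2:ℕ):ℤ) by rfl, zpow_natCast, Complex.I_sq] at hM
        norm_num at hM
      · rw [show (3:ℤ) = ((3:ℕ):ℤ) by rfl, zpow_natCast, pow_succ,
          Complex.I_sq] at hM
        have := congrArg Complex.im hM
        simp at this
    · refine ⟨-1, Or.inr rfl, by rw [h1]; norm_num, ?_⟩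
      rcases hmr with h | h | h | h <;> rw [h] at hM
      · rw [zpow_zero, mul_one] at hM; norm_num at hM
      · rw [zpow_one] at hM
        simpa using congrArg Complex.im hM
      · omega
      · rw [show (3:ℤ) = ((3:ℕ):ℤ) by rfl, zpow_natCast, pow_succ,
          Complex.I_sq] at hM
        have := congrArg Complex.im hM
        simp at this
  obtain ⟨c, hc1, hc2, hc3⟩ := key
  constructor
  · exact ⟨c, hc2, hc3⟩
  · intro hgcd i hki
    have hj2 : j = 2 * i := by
      have : (2 * k : ℝ) = ((2 * i : ℤ) : ℝ) := by rw [hki]; push_cast; ring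
      rw [hk] at this
      exact_mod_cast this
    have hrodd : ¬ (2 ∣ r) := fun h => by
      have : (2:ℕ) ∣ Nat.gcd r 6 := Nat.dvd_gcd h (by norm_num)
      omega
    rcases hrodd (by omega)
end
end

section
/- Let ℓ ≥ 5 be prime, K a number field, v a prime of K above ℓ with ring of v-integral elements O_v. Let λ̄ ≥ 0 be an integer and let p ≥ 5 be prime with p ≢ 0, 1 (mod ℓ). Suppose (c(n))_{n≥1} is a sequence in O_v, with the convention c(x) = 0 when x is not a positive integer, such that for every positive integer n with gcd(n, 6) = 1 one has c(n²p²) + p^{λ̄+1}(12n²/p) c(n²) + p^{2λ̄+3} c(n²/p²) ≡ (12/p)(p^{λ̄+2} + p^{λ̄+1}) c(n²) (mod v). Then for every positive integer n₀ with gcd(n₀, 6) = 1 and p ∤ n₀, and every integer a ≥ 0, one has c(p^{2a} n₀²) ≡ (12/p)^a p^{a(λ̄+2)} c(n₀²) (mod v). -/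
open Complex UpperHalfPlane CongruenceSubgroup Matrix NumberField
open scoped Manifold MatrixGroups Real

noncomputable section

section VCzLemmas

variable {K : Type*} [Field K] [NumberField K] (v : Ideal (𝓞 K))

/-- Auxiliary: `x` is congruent to `0` mod `v` in the localization sense. -/
def VCz (x : K) : Prop := ∃ a b : 𝓞 K, b ∉ v ∧ a ∈ v ∧ (b : K) * x = (a : K)

lemma vcong_to {x y : K} (h : VCong v x y) : VCz v (x - y) := h

lemma vcz_to_vcong {x y : K} (h : VCz v (x - y)) : VCong v x y := h

lemma vcz_congr {x y : K} (h : VCz v x) (e : x = y) : VCz v y := e ▸ h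

lemma vcz_zero (hv : v.IsMaximal) : VCz v (0 : K) := by
  refine ⟨0, 1, fun h => hv.ne_top ((Ideal.eq_top_iff_one v).mpr h), v.zero_mem, ?_⟩
  rw [mul_zero]
  exact (map_zero (algebraMap (𝓞 K) K)).symm

lemma vcz_add (hP : v.IsPrime) {x y : K} (hx : VCz v x) (hy : VCz v y) : VCz v (x + y) := by
  obtain ⟨a1, b1, hb1, ha1, e1⟩ := hx
  obtain ⟨a2, b2, hb2, ha2, e2⟩ := hy
  refine ⟨b2 * a1 + b1 * a2, b1 * b2, fun h => ?_, v.add_mem (v.mul_mem_left _ ha1) (v.mul_mem_left _ ha2), ?_⟩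
  · rcases hP.mem_or_mem h with h | h
    exacts [hb1 h, hb2 h]
  · have c1 : ((b1 * b2 : 𝓞 K) : K) = (b1 : K) * (b2 : K) := map_mul (algebraMap (𝓞 K) K) _ _
    have c2 : ((b2 * a1 + b1 * a2 : 𝓞 K) : K) = (b2 : K) * (a1 : K) + (b1 : K) * (a2 : K) := by
      have ha' : ((b2 * a1 + b1 * a2 : 𝓞 K) : K) = ((b2 * a1 : 𝓞 K) : K) + ((b1 * a2 : 𝓞 K) : K) :=
        map_add (algebraMap (𝓞 K) K) _ _
      have hm1 : ((b2 * a1 : 𝓞 K) : K) = (b2 : K) * (a1 : K) := map_mul (algebraMap (𝓞 K) K) _ _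
      have hm2 : ((b1 * a2 : 𝓞 K) : K) = (b1 : K) * (a2 : K) := map_mul (algebraMap (𝓞 K) K) _ _
      rw [ha', hm1, hm2]
    rw [c1, c2]
    linear_combination (b2 : K) * e1 + (b1 : K) * e2

lemma vcz_int_mul (m : ℤ) {x : K} (hx : VCz v x) : VCz v ((m : K) * x) := by
  obtain ⟨a, b, hb, ha, e⟩ := hx
  refine ⟨(m : 𝓞 K) * a, b, hb, v.mul_mem_left _ ha, ?_⟩
  have c1 : (((m : 𝓞 K) * a : 𝓞 K) : K) = (m : K) * (a : K) := by
    have hm : (((m : 𝓞 K) * a : 𝓞 K) : K) = ((m : 𝓞 K) : K) * (a : K) :=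
      map_mul (algebraMap (𝓞 K) K) _ _
    have hi : ((m : 𝓞 K) : K) = (m : K) := map_intCast (algebraMap (𝓞 K) K) m
    rw [hm, hi]
  rw [c1]
  linear_combination (m : K) * e

end VCzLemmas

lemma jacobi12aux : ∀ r : ℕ, r < 48 → r % 2 = 1 → r % 3 ≠ 0 →
    jacobiSym 12 r = kron12 (r : ℤ) := by
  intro r h1 h2 h3
  interval_cases r <;> first | omega | norm_num [kron12]

lemma jacobi12 (p : ℕ) (hp2 : p % 2 = 1) (hp3 : p % 3 ≠ 0) :
    jacobiSym 12 p = kron12 (p : ℤ) := by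
  have hodd : Odd p := Nat.odd_iff.mpr hp2
  rw [jacobiSym.mod_right 12 hodd]
  norm_num
  rw [jacobi12aux (p % 48) (Nat.mod_lt _ (by norm_num)) (by omega) (by omega)]
  unfold kron12
  have h : ((p % 48 : ℕ) : ℤ) % 12 = (p : ℤ) % 12 := by omega
  rw [h]

/-- the Hecke recursion propagates along powers of `p`. -/
theorem stmt15 (ℓ : ℕ) (hℓ : ℓ.Prime) (hℓ5 : 5 ≤ ℓ)
    {K : Type*} [Field K] [NumberField K]
    (v : Ideal (𝓞 K)) (hv : v.IsMaximal) (hℓv : (ℓ : 𝓞 K) ∈ v)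
    (lamb : ℕ) (p : ℕ) (hp : p.Prime) (hp5 : 5 ≤ p) (hp0 : p % ℓ ≠ 0) (hp1 : p % ℓ ≠ 1)
    (c : ℕ → K) (hcint : ∀ n, VInt v (c n))
    (hrec : ∀ n : ℕ, 1 ≤ n → Nat.gcd n 6 = 1 →
      VCong v
        (c (n ^ 2 * p ^ 2) +
          (p : K) ^ (lamb + 1) * ((jacobiSym (12 * (n : ℤ) ^ 2) p : ℤ) : K) * c (n ^ 2) +
          (p : K) ^ (2 * lamb + 3) * (if p ∣ n then c ((n / p) ^ 2) else 0))
        (((kron12 (p : ℤ) : ℤ) : K) * ((p : K) ^ (lamb + 2) + (p : K) ^ (lamb + 1)) *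
          c (n ^ 2))) :
    ∀ n₀ : ℕ, 1 ≤ n₀ → Nat.gcd n₀ 6 = 1 → ¬ p ∣ n₀ → ∀ a : ℕ,
      VCong v (c (p ^ (2 * a) * n₀ ^ 2))
        (((kron12 (p : ℤ) : ℤ) : K) ^ a * (p : K) ^ (a * (lamb + 2)) * c (n₀ ^ 2)) := by
  intro n₀ hn1 hn6 hpn
  have hvP : v.IsPrime := hv.isPrime
  have hp2 : p % 2 = 1 := Nat.odd_iff.mp (hp.odd_of_ne_two (by omega))
  have hp3 : p % 3 ≠ 0 := by
    intro h
    rcases hp.eq_one_or_self_of_dvd 3 (Nat.dvd_of_mod_eq_zero h) with h' | h' <;> omega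
  have hκ : kron12 (p : ℤ) * kron12 (p : ℤ) = 1 := by
    unfold kron12
    have h12 : (p : ℤ) % 12 = 1 ∨ (p : ℤ) % 12 = 5 ∨ (p : ℤ) % 12 = 7 ∨ (p : ℤ) % 12 = 11 := by
      omega
    rcases h12 with h | h | h | h <;> rw [h] <;> norm_num
  have hκK : ((kron12 (p : ℤ) : ℤ) : K) * ((kron12 (p : ℤ) : ℤ) : K) = 1 := by
    rw [← Int.cast_mul, hκ, Int.cast_one]
  suffices H : ∀ a : ℕ,
      VCz v (c (p ^ (2 * a) * n₀ ^ 2) -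
        ((kron12 (p : ℤ) : ℤ) : K) ^ a * (p : K) ^ (a * (lamb + 2)) * c (n₀ ^ 2)) ∧
      VCz v (c (p ^ (2 * (a + 1)) * n₀ ^ 2) -
        ((kron12 (p : ℤ) : ℤ) : K) ^ (a + 1) * (p : K) ^ ((a + 1) * (lamb + 2)) * c (n₀ ^ 2)) by
    intro a
    exact vcz_to_vcong v (H a).1
  have hG1 : VCz v (c (p ^ (2 * 1) * n₀ ^ 2) -
      ((kron12 (p : ℤ) : ℤ) : K) ^ 1 * (p : K) ^ (1 * (lamb + 2)) * c (n₀ ^ 2)) := by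
    have hgnp : Nat.Coprime n₀ p := (hp.coprime_iff_not_dvd.mpr hpn).symm
    have hJ : jacobiSym (12 * (n₀ : ℤ) ^ 2) p = kron12 (p : ℤ) := by
      rw [jacobiSym.mul_left, jacobiSym.sq_one' (by rw [Int.gcd_natCast_natCast]; exact hgnp),
        mul_one, jacobi12 p hp2 hp3]
    have hr := hrec n₀ hn1 hn6
    rw [hJ, if_neg hpn] at hr
    have hidx1 : n₀ ^ 2 * p ^ 2 = p ^ (2 * 1) * n₀ ^ 2 := by ring
    rw [hidx1] at hr
    refine vcz_congr v (vcong_to v hr) ?_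
    push_cast
    ring
  intro a
  induction a with
  | zero =>
    constructor
    · have hidx : p ^ (2 * 0) * n₀ ^ 2 = n₀ ^ 2 := by norm_num
      refine vcz_congr v (vcz_zero v hv) ?_
      rw [hidx]
      simp
    · exact hG1
  | succ a ih =>
    obtain ⟨ha, ha1⟩ := ih
    refine ⟨ha1, ?_⟩
    set n := p ^ (a + 1) * n₀ with hn
    have hppos : 0 < p := hp.pos
    have hnpos : 1 ≤ n := Nat.mul_pos (pow_pos hppos _) hn1
    have hp6 : Nat.Coprime p 6 := by
      refine hp.coprime_iff_not_dvd.mpr ?_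
      intro h
      have h6 := Nat.le_of_dvd (by norm_num) h
      interval_cases p <;> omega
    have hg6 : Nat.gcd n 6 = 1 := Nat.Coprime.mul (hp6.pow_left (a + 1)) hn6
    have hpdvd : p ∣ n := ⟨p ^ a * n₀, by rw [hn]; ring⟩
    have hJ0 : jacobiSym (12 * (n : ℤ) ^ 2) p = 0 := by
      have hdn : (p : ℤ) ∣ (n : ℤ) := Int.natCast_dvd_natCast.mpr hpdvd
      have hd : (p : ℤ) ∣ 12 * (n : ℤ) ^ 2 :=
        Dvd.dvd.mul_left (dvd_pow hdn (by norm_num)) 12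
      haveI : NeZero p := ⟨by omega⟩
      rw [jacobiSym.eq_zero_iff_not_coprime]
      intro h
      have hco := Int.isCoprime_iff_gcd_eq_one.mpr h
      have hu := IsCoprime.isUnit_of_dvd' hco hd (dvd_refl _)
      rw [Int.isUnit_iff] at hu
      omega
    have hdiv : n / p = p ^ a * n₀ := by
      have h' : n = p * (p ^ a * n₀) := by rw [hn]; ring
      rw [h', Nat.mul_div_cancel_left _ hppos]
    have hr := hrec n hnpos hg6
    rw [hJ0, if_pos hpdvd, hdiv] at hr
    have i1 : n ^ 2 * p ^ 2 = p ^ (2 * (a + 1 + 1)) * n₀ ^ 2 := by rw [hn]; ring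
    have i2 : n ^ 2 = p ^ (2 * (a + 1)) * n₀ ^ 2 := by rw [hn]; ring
    have i3 : (p ^ a * n₀) ^ 2 = p ^ (2 * a) * n₀ ^ 2 := by ring
    rw [i1, i2, i3] at hr
    have h1 := vcz_int_mul v (kron12 (p : ℤ) * ((p : ℤ) ^ (lamb + 2) + (p : ℤ) ^ (lamb + 1))) ha1
    have h2 := vcz_int_mul v (-((p : ℤ) ^ (2 * lamb + 3))) ha
    have h3 := vcz_add v hvP (vcz_add v hvP (vcong_to v hr) h1) h2
    refine vcz_congr v h3 ?_
    push_cast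
    linear_combination (-(((kron12 (p : ℤ) : ℤ) : K) ^ a * (p : K) ^ (a * (lamb + 2)) *
      (p : K) ^ (2 * lamb + 3) * c (n₀ ^ 2))) * hκK
end
end
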